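/- Fix positive real numbers r1 = |Z1| and r2 = |Z2| with r1 ≠ r2. Define U(Δ) = 2/r1 + 2/r2 + 1/√(r1² + r2² + 2 r1 r2 cos Δ) + 1/√(r1² + r2² − 2 r1 r2 cos Δ) for Δ ∈ [0, π/2]. Then U is strictly decreasing on [0, π/2]; more precisely its derivative satisfies dU/dΔ ≤ 0 on [0, π/2], with equality if and only if Δ = 0 or Δ = π/2. -/

import Mathlib

open Real Set

lemma aux_deriv (a b : ℝ) (hb : 0 < b) (hab : b < a) (Δ : ℝ) :
    HasDerivAt (fun x => 1 / Real.sqrt (a + b * Real.cos x)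
      + 1 / Real.sqrt (a - b * Real.cos x))
    (b * Real.sin Δ *
      (1 / (2 * Real.sqrt (a + b * Real.cos Δ) * (a + b * Real.cos Δ))
       - 1 / (2 * Real.sqrt (a - b * Real.cos Δ) * (a - b * Real.cos Δ)))) Δ := by
  have hp : 0 < a + b * Real.cos Δ := by
    nlinarith [Real.neg_one_le_cos Δ, Real.cos_le_one Δ]
  have hm : 0 < a - b * Real.cos Δ := by
    nlinarith [Real.neg_one_le_cos Δ, Real.cos_le_one Δ]
  have hsp : 0 < Real.sqrt (a + b * Real.cos Δ) := Real.sqrt_pos.2 hp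
  have hsm : 0 < Real.sqrt (a - b * Real.cos Δ) := Real.sqrt_pos.2 hm
  have hg1 : HasDerivAt (fun x => a + b * Real.cos x) (b * (-Real.sin Δ)) Δ :=
    ((Real.hasDerivAt_cos Δ).const_mul b).const_add a
  have hg2 : HasDerivAt (fun x => a - b * Real.cos x) (-(b * (-Real.sin Δ))) Δ :=
    ((Real.hasDerivAt_cos Δ).const_mul b).const_sub a
  have hs1 := hg1.sqrt hp.ne'
  have hs2 := hg2.sqrt hm.ne'
  have hi1 := hs1.inv hsp.ne'
  have hi2 := hs2.inv hsm.ne'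
  have := hi1.add hi2
  simp only [one_div]
  convert this using 1
  any_goals rfl
  have e1 : Real.sqrt (a + b * Real.cos Δ) ^ 2 = a + b * Real.cos Δ :=
    Real.sq_sqrt hp.le
  have e2 : Real.sqrt (a - b * Real.cos Δ) ^ 2 = a - b * Real.cos Δ :=
    Real.sq_sqrt hm.le
  field_simp
  linear_combination Real.sin Δ * (a - b * Real.cos Δ) * Real.sqrt (a - b * Real.cos Δ) ^ 3 * e1
    - Real.sin Δ * (a + b * Real.cos Δ) * Real.sqrt (a + b * Real.cos Δ) ^ 3 * e2

/-- For fixed `0 < r1`, `0 < r2`, `r1 ≠ r2`, the potential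
`U(Δ) = 2/r1 + 2/r2 + 1/√(r1²+r2²+2r1r2 cos Δ) + 1/√(r1²+r2²−2r1r2 cos Δ)`
is strictly decreasing on `[0, π/2]`, with `U'(Δ) ≤ 0` there and `U'(Δ) = 0` iff
`Δ = 0` or `Δ = π/2`. -/
theorem stmt1 (r1 r2 : ℝ) (hr1 : 0 < r1) (hr2 : 0 < r2) (hne : r1 ≠ r2)
    (U : ℝ → ℝ)
    (hU : ∀ Δ : ℝ, U Δ = 2 / r1 + 2 / r2
      + 1 / Real.sqrt (r1 ^ 2 + r2 ^ 2 + 2 * r1 * r2 * Real.cos Δ)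
      + 1 / Real.sqrt (r1 ^ 2 + r2 ^ 2 - 2 * r1 * r2 * Real.cos Δ)) :
    StrictAntiOn U (Icc 0 (π / 2)) ∧
    ∀ Δ ∈ Icc (0 : ℝ) (π / 2),
      deriv U Δ ≤ 0 ∧ (deriv U Δ = 0 ↔ Δ = 0 ∨ Δ = π / 2) := by
  set a := r1 ^ 2 + r2 ^ 2 with ha
  set b := 2 * r1 * r2 with hbdef
  have hb : 0 < b := by positivity
  have hab : b < a := by
    have h : r1 - r2 ≠ 0 := sub_ne_zero.2 hne
    have h2 : 0 < (r1 - r2) ^ 2 := by positivity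
    simp only [ha, hbdef]; nlinarith
  set D : ℝ → ℝ := fun Δ => b * Real.sin Δ *
      (1 / (2 * Real.sqrt (a + b * Real.cos Δ) * (a + b * Real.cos Δ))
       - 1 / (2 * Real.sqrt (a - b * Real.cos Δ) * (a - b * Real.cos Δ))) with hDdef
  have hUeq : U = fun x => 2 / r1 + 2 / r2
      + (1 / Real.sqrt (a + b * Real.cos x) + 1 / Real.sqrt (a - b * Real.cos x)) := by
    funext x; rw [hU]; ring
  have hder : ∀ Δ : ℝ, HasDerivAt U (D Δ) Δ := by
    intro Δ
    have h := (aux_deriv a b hb hab Δ).const_add (2 / r1 + 2 / r2)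
    rw [hUeq]; exact h
  -- positivity facts
  have hp : ∀ Δ : ℝ, 0 < a + b * Real.cos Δ := fun Δ => by
    nlinarith [Real.neg_one_le_cos Δ, Real.cos_le_one Δ]
  have hm : ∀ Δ : ℝ, 0 < a - b * Real.cos Δ := fun Δ => by
    nlinarith [Real.neg_one_le_cos Δ, Real.cos_le_one Δ]
  have hneg : ∀ x ∈ Ioo (0 : ℝ) (π / 2), D x < 0 := by
    intro x hx
    have hsin : 0 < Real.sin x :=
      Real.sin_pos_of_pos_of_lt_pi hx.1 (lt_trans hx.2 (by linarith [pi_pos]))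
    have hcos : 0 < Real.cos x :=
      Real.cos_pos_of_mem_Ioo ⟨by linarith [hx.1, pi_pos], hx.2⟩
    have hlt : a - b * Real.cos x < a + b * Real.cos x := by nlinarith
    have hslt : Real.sqrt (a - b * Real.cos x) < Real.sqrt (a + b * Real.cos x) :=
      Real.sqrt_lt_sqrt (hm x).le hlt
    have hsm := Real.sqrt_pos.2 (hm x)
    have hkey : 2 * Real.sqrt (a - b * Real.cos x) * (a - b * Real.cos x)
        < 2 * Real.sqrt (a + b * Real.cos x) * (a + b * Real.cos x) := by
      nlinarith [hm x, hp x, hsm, hslt]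
    have hbr : 1 / (2 * Real.sqrt (a + b * Real.cos x) * (a + b * Real.cos x))
        - 1 / (2 * Real.sqrt (a - b * Real.cos x) * (a - b * Real.cos x)) < 0 := by
      have h1 : 0 < 2 * Real.sqrt (a - b * Real.cos x) * (a - b * Real.cos x) := mul_pos (mul_pos two_pos hsm) (hm x)
      have := one_div_lt_one_div_of_lt h1 hkey
      linarith
    exact mul_neg_of_pos_of_neg (mul_pos hb hsin) hbr
  refine ⟨?_, ?_⟩
  · apply strictAntiOn_of_deriv_neg (convex_Icc _ _)
    · exact fun x _ => ((hder x).differentiableAt.continuousAt).continuousWithinAt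
    · intro x hx
      rw [interior_Icc] at hx
      rw [(hder x).deriv]
      exact hneg x hx
  · intro Δ hΔ
    rw [(hder Δ).deriv]
    have hsin : 0 ≤ Real.sin Δ :=
      Real.sin_nonneg_of_nonneg_of_le_pi hΔ.1 (le_trans hΔ.2 (by linarith [pi_pos]))
    have hcos : 0 ≤ Real.cos Δ :=
      Real.cos_nonneg_of_mem_Icc ⟨by linarith [hΔ.1, pi_pos], hΔ.2⟩
    constructor
    · -- D Δ ≤ 0
      have hle : a - b * Real.cos Δ ≤ a + b * Real.cos Δ := by nlinarith
      have hsle : Real.sqrt (a - b * Real.cos Δ) ≤ Real.sqrt (a + b * Real.cos Δ) :=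
        Real.sqrt_le_sqrt hle
      have hsm := Real.sqrt_pos.2 (hm Δ)
      have hkey : 2 * Real.sqrt (a - b * Real.cos Δ) * (a - b * Real.cos Δ)
          ≤ 2 * Real.sqrt (a + b * Real.cos Δ) * (a + b * Real.cos Δ) := by
        nlinarith [hm Δ, hp Δ, hsm, hsle]
      have hbr : 1 / (2 * Real.sqrt (a + b * Real.cos Δ) * (a + b * Real.cos Δ))
          - 1 / (2 * Real.sqrt (a - b * Real.cos Δ) * (a - b * Real.cos Δ)) ≤ 0 := by
        have h1 : 0 < 2 * Real.sqrt (a - b * Real.cos Δ) * (a - b * Real.cos Δ) := mul_pos (mul_pos two_pos hsm) (hm Δ)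
        have := one_div_le_one_div_of_le h1 hkey
        linarith
      exact mul_nonpos_of_nonneg_of_nonpos (mul_nonneg hb.le hsin) hbr
    · constructor
      · intro h0
        by_contra hcon
        push_neg at hcon
        have h1 : 0 < Δ := lt_of_le_of_ne hΔ.1 (Ne.symm hcon.1)
        have h2 : Δ < π / 2 := lt_of_le_of_ne hΔ.2 hcon.2
        exact absurd h0 (ne_of_lt (hneg Δ ⟨h1, h2⟩))
      · rintro (rfl | rfl)
        · simp [hDdef]
        · simp [hDdef, Real.cos_pi_div_two]
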